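/- There is no flip-set with the Baire property: if F ⊆ (ℕ → Bool) satisfies that whenever z, w ∈ ℕ → Bool differ in exactly one coordinate then (z ∈ F ↔ w ∉ F), and F has the Baire property in Cantor space, then this leads to a contradiction. Equivalently, every flip-set fails to have the Baire property. -/

import Mathlib

open Set

/-- The flip-at-`n` map on Cantor space. -/
private def flip' (n : ℕ) (x : ℕ → Bool) : ℕ → Bool := fun i => if i = n then !(x i) else x i

private lemma flip'_invol (n : ℕ) (x : ℕ → Bool) : flip' n (flip' n x) = x := by
  funext i
  simp only [flip']
  split <;> simp

private lemma flip'_continuous (n : ℕ) : Continuous (flip' n) := by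
  refine continuous_pi fun i => ?_
  by_cases h : i = n
  · simpa only [flip', h, if_pos rfl, ↓reduceIte, Function.comp_def] using
      (continuous_of_discreteTopology (f := fun b : Bool => !b)).comp (continuous_apply n)
  · simpa only [flip', h, if_neg h, ↓reduceIte] using continuous_apply i

private lemma flip'_isOpenMap (n : ℕ) : IsOpenMap (flip' n) := by
  have : flip' n = (Homeomorph.mk ⟨flip' n, flip' n, flip'_invol n, flip'_invol n⟩
      (flip'_continuous n) (flip'_continuous n)) := rfl
  rw [this]
  exact (Homeomorph.mk ⟨flip' n, flip' n, flip'_invol n, flip'_invol n⟩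
      (flip'_continuous n) (flip'_continuous n)).isOpenMap

private lemma flip'_diff (n : ℕ) (x : ℕ → Bool) : ∃! m : ℕ, x m ≠ flip' n x m := by
  refine ⟨n, by simp [flip'], fun m hm => ?_⟩
  by_contra h
  exact hm (by simp [flip', h])

/-- No flip-set has the Baire property: if `F ⊆ ℕ → Bool` flips membership whenever
two points differ in exactly one coordinate, then `F` does not differ from an open
set by a meager set. -/
theorem stmt_3 (F : Set (ℕ → Bool))
    (hflip : ∀ z w : ℕ → Bool, (∃! n : ℕ, z n ≠ w n) → (z ∈ F ↔ w ∉ F)) :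
    ¬ ∃ U : Set (ℕ → Bool), IsOpen U ∧ IsMeagre (symmDiff F U) := by
  rintro ⟨U, hU, hM⟩
  -- the flip map sends F to its complement
  have hpre : ∀ n : ℕ, flip' n ⁻¹' F = Fᶜ := by
    intro n
    ext x
    have := hflip x (flip' n x) (flip'_diff n x)
    simp only [mem_preimage, mem_compl_iff]
    tauto
  have key : ∀ (C : Set (ℕ → Bool)) (n : ℕ), C.Nonempty → IsOpen C →
      flip' n ⁻¹' C = C → IsMeagre (C \ F) → False := by
    intro C n hCne hCopen hCinv hCF
    have h2 : IsMeagre (flip' n ⁻¹' (C \ F)) :=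
      hCF.preimage_of_isOpenMap (flip'_continuous n) (flip'_isOpenMap n)
    rw [preimage_diff, hCinv, hpre] at h2
    have h3 : IsMeagre C := by
      have : C ⊆ (C \ F) ∪ (C \ Fᶜ) := by
        intro x hx
        by_cases hxF : x ∈ F
        · exact Or.inr ⟨hx, by simpa using hxF⟩
        · exact Or.inl ⟨hx, hxF⟩
      have hun : IsMeagre ((C \ F) ∪ (C \ Fᶜ)) := by
        rw [IsMeagre, Set.compl_union]
        exact Filter.inter_mem hCF h2
      exact hun.mono this
    -- a nonempty open set is not meagre in a Baire space
    have hdense : Dense Cᶜ := dense_of_mem_residual h3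
    obtain ⟨x, hx⟩ := hCne
    obtain ⟨y, hyC, hyCc⟩ := hdense.inter_open_nonempty C hCopen ⟨x, hx⟩
    exact hyCc hyC
  rcases eq_empty_or_nonempty U with rfl | ⟨y, hyU⟩
  · -- U = ∅ : F itself is meagre, apply key with C = univ, using Fᶜ meagre too
    have hF : IsMeagre F := by simpa [Set.symmDiff_def] using hM
    have hFc : IsMeagre (Fᶜ) := by
      have := hF.preimage_of_isOpenMap (flip'_continuous 0) (flip'_isOpenMap 0)
      rwa [hpre] at this
    refine key univ 0 ⟨fun _ => true, trivial⟩ isOpen_univ (by simp) ?_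
    rw [show (univ : Set (ℕ → Bool)) \ F = Fᶜ from by ext x; simp]
    exact hFc
  · -- U nonempty: find a cylinder C ⊆ U
    obtain ⟨I, u, hu, hsub⟩ := isOpen_pi_iff.mp hU y hyU
    set C : Set (ℕ → Bool) := (↑I : Set ℕ).pi (fun i => {y i}) with hC
    have hCsub : C ⊆ U := by
      intro x hx
      apply hsub
      intro i hi
      have := hx i hi
      simp only [mem_singleton_iff] at this
      rw [this]
      exact (hu i hi).2
    have hCopen : IsOpen C :=
      isOpen_set_pi I.finite_toSet (fun i _ => isOpen_discrete _)
    have hCne : C.Nonempty := ⟨y, fun i _ => rfl⟩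
    set n : ℕ := I.sup id + 1 with hn
    have hnI : n ∉ I := by
      intro h
      have h2 := Finset.le_sup (f := id) h
      simp only [id_eq] at h2
      omega
    have hCinv : flip' n ⁻¹' C = C := by
      ext x
      simp only [mem_preimage, hC, mem_pi]
      refine ⟨fun h i hi => ?_, fun h i hi => ?_⟩ <;>
        · have hne : i ≠ n := fun he => hnI (he ▸ hi)
          have := h i hi
          simpa [flip', hne] using this
    have hCF : IsMeagre (C \ F) := by
      refine hM.mono ?_
      intro x hx
      have : x ∈ U \ F := ⟨hCsub hx.1, hx.2⟩
      simp only [symmDiff_def, Set.sup_eq_union, mem_union]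
      exact Or.inr ⟨this.1, this.2⟩
    exact key C n hCne hCopen hCinv hCF
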